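/- arXiv:1709.06183 — 3 statements merged into one kernel-verified Lean document; each statement's English description precedes it below -/
import Mathlib

section
/- Let X be a nonnegative random variable on a probability space with E[X²] < ∞ and E[X ln X] < ∞ (with the convention 0 ln 0 = 0), and assume E[X] > 0. Define Ent(X) = E[X ln X] − E[X] ln E[X]. Then Ent(X) ≤ E[X] · ln( 1 + Var(X)/(E[X])² ) ≤ √(Var(X)). -/
open MeasureTheory

lemma log_one_add_sq_le' {s : ℝ} (hs : 0 ≤ s) : Real.log (1 + s ^ 2) ≤ s := by
  rw [Real.log_le_iff_le_exp (by positivity)]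
  have h := Real.sum_le_exp_of_nonneg hs 4
  simp [Finset.sum_range_succ, Nat.factorial] at h
  nlinarith [sq_nonneg (2 * s - 3), mul_nonneg (mul_nonneg hs hs) hs]

/-- upper bound on the entropy functional:
`Ent(X) ≤ E[X]·ln(1 + Var(X)/(E[X])²) ≤ √Var(X)` for a nonnegative random variable `X`
with finite second moment and finite `E[X ln X]` (convention `0 ln 0 = 0`), `E[X] > 0`. -/
theorem ent_upper_bound {Ω : Type*} [MeasurableSpace Ω] (μ : Measure Ω)
    [IsProbabilityMeasure μ] (X : Ω → ℝ)
    (hX0 : ∀ ω, 0 ≤ X ω)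
    (hX1 : Integrable X μ)
    (hX2 : Integrable (fun ω => (X ω) ^ 2) μ)
    (hXlog : Integrable (fun ω => X ω * Real.log (X ω)) μ)
    (hEX : 0 < ∫ ω, X ω ∂μ) :
    (∫ ω, X ω * Real.log (X ω) ∂μ) - (∫ ω, X ω ∂μ) * Real.log (∫ ω, X ω ∂μ) ≤
      (∫ ω, X ω ∂μ) *
        Real.log (1 + ((∫ ω, (X ω) ^ 2 ∂μ) - (∫ ω, X ω ∂μ) ^ 2) / (∫ ω, X ω ∂μ) ^ 2) ∧
    (∫ ω, X ω ∂μ) *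
        Real.log (1 + ((∫ ω, (X ω) ^ 2 ∂μ) - (∫ ω, X ω ∂μ) ^ 2) / (∫ ω, X ω ∂μ) ^ 2) ≤
      Real.sqrt ((∫ ω, (X ω) ^ 2 ∂μ) - (∫ ω, X ω ∂μ) ^ 2) := by
  set m : ℝ := ∫ ω, X ω ∂μ with hm
  set S : ℝ := ∫ ω, (X ω) ^ 2 ∂μ with hS
  -- variance nonneg: m^2 ≤ S
  have hvar : m ^ 2 ≤ S := by
    have ha : Integrable (fun ω => X ω ^ 2 - 2 * m * X ω) μ := hX2.sub (hX1.const_mul _)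
    have h2 : 0 ≤ ∫ ω, (X ω ^ 2 - 2 * m * X ω + m ^ 2) ∂μ :=
      integral_nonneg fun ω => by
        simp only [Pi.zero_apply]; nlinarith [sq_nonneg (X ω - m)]
    rw [integral_add ha (integrable_const _), integral_sub hX2 (hX1.const_mul _),
      integral_const_mul, integral_const] at h2
    simp only [probReal_univ, ENNReal.toReal_one, smul_eq_mul, one_mul] at h2
    nlinarith
  have hS0 : 0 < S := lt_of_lt_of_le (by positivity) hvar
  set c : ℝ := S / m with hc
  have hc0 : 0 < c := div_pos hS0 hEX
  -- pointwise bound and first moment bound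
  have key : ∫ ω, X ω * Real.log (X ω) ∂μ ≤ m * Real.log c + S / c - m := by
    have ha : Integrable (fun ω => X ω * Real.log c) μ := hX1.mul_const _
    have hb : Integrable (fun ω => X ω ^ 2 / c) μ := hX2.div_const _
    have hab : Integrable (fun ω => X ω * Real.log c + X ω ^ 2 / c) μ := ha.add hb
    have hint : Integrable (fun ω => X ω * Real.log c + X ω ^ 2 / c - X ω) μ := hab.sub hX1
    have hpt : ∀ ω, X ω * Real.log (X ω) ≤ X ω * Real.log c + X ω ^ 2 / c - X ω := by
      intro ω
      rcases eq_or_lt_of_le (hX0 ω) with h | h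
      · simp [← h]
      · have hlog : Real.log (X ω) - Real.log c ≤ X ω / c - 1 := by
          have := Real.log_le_sub_one_of_pos (div_pos h hc0)
          rwa [Real.log_div (ne_of_gt h) (ne_of_gt hc0)] at this
        have h4 := mul_le_mul_of_nonneg_left hlog (hX0 ω)
        have h3 : X ω * (X ω / c) = X ω ^ 2 / c := by field_simp
        rw [mul_sub, mul_sub, mul_one, h3] at h4
        linarith
    calc ∫ ω, X ω * Real.log (X ω) ∂μ
        ≤ ∫ ω, (X ω * Real.log c + X ω ^ 2 / c - X ω) ∂μ :=
          integral_mono hXlog hint hpt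
      _ = m * Real.log c + S / c - m := by
          rw [integral_sub hab hX1, integral_add ha hb, integral_mul_const, integral_div]
  have hScm : S / c = m := by
    rw [hc, div_div_eq_mul_div, mul_comm, mul_div_assoc, div_self (ne_of_gt hS0), mul_one]
  have hrw : 1 + (S - m ^ 2) / m ^ 2 = S / m ^ 2 := by field_simp; ring
  have hlogeq : Real.log c - Real.log m = Real.log (1 + (S - m ^ 2) / m ^ 2) := by
    rw [← Real.log_div (ne_of_gt hc0) (ne_of_gt hEX), hc, div_div, hrw, sq]
  constructor
  · have h5 : ∫ ω, X ω * Real.log (X ω) ∂μ ≤ m * Real.log c := by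
      rw [hScm] at key; linarith
    calc (∫ ω, X ω * Real.log (X ω) ∂μ) - m * Real.log m
        ≤ m * Real.log c - m * Real.log m := by linarith
      _ = m * Real.log (1 + (S - m ^ 2) / m ^ 2) := by rw [← hlogeq]; ring
  · set V : ℝ := S - m ^ 2 with hV
    have hV0 : 0 ≤ V := by simp only [hV]; linarith
    have hts : (Real.sqrt (V / m ^ 2)) ^ 2 = V / m ^ 2 :=
      Real.sq_sqrt (by positivity)
    have h1 : Real.log (1 + V / m ^ 2) ≤ Real.sqrt (V / m ^ 2) := by
      have := log_one_add_sq_le' (Real.sqrt_nonneg (V / m ^ 2))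
      rwa [hts] at this
    have h2 : m * Real.sqrt (V / m ^ 2) = Real.sqrt V := by
      rw [Real.sqrt_div hV0, Real.sqrt_sq (le_of_lt hEX)]
      field_simp
    calc m * Real.log (1 + V / m ^ 2) ≤ m * Real.sqrt (V / m ^ 2) :=
          mul_le_mul_of_nonneg_left h1 (le_of_lt hEX)
      _ = Real.sqrt V := h2
end

section
/- Let X be a nonnegative integrable random variable on a probability space with E[X ln X] < ∞ (with the convention 0 ln 0 = 0), and assume E[X] > 0. Define Ent(X) = E[X ln X] − E[X] ln E[X]. Then: (i) Ent(X) ≥ 2 ( E[X] − √(E[X]) · E[√X] ) ≥ Var(√X) = E[X] − (E[√X])²; and (ii) Ent(X) ≥ (1/2) · E[X] · ( E| X/E[X] − 1 | )². -/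
open MeasureTheory

private noncomputable def entH (u : ℝ) : ℝ := 4*(u+1)*Real.log u - 8*(u-1)
private noncomputable def entG (u : ℝ) : ℝ := (2*u+4)*(u*Real.log u - u + 1) - 3*(u-1)^2

private lemma entH_hasDeriv {u : ℝ} (hu : 0 < u) :
    HasDerivAt entH (4*Real.log u + 4*(u+1)*u⁻¹ - 8) u := by
  have h1 : HasDerivAt (fun u : ℝ => 4*(u+1)) 4 u := by
    simpa using (((hasDerivAt_id u).add_const 1).const_mul (4:ℝ))
  have h2 := (h1.mul (Real.hasDerivAt_log hu.ne'))
  have h3 : HasDerivAt (fun u : ℝ => 8*(u-1)) 8 u := by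
    simpa using (((hasDerivAt_id u).sub_const 1).const_mul (8:ℝ))
  exact h2.sub h3
private lemma entH_mono : MonotoneOn entH (Set.Ioi 0) := by
  apply monotoneOn_of_deriv_nonneg (convex_Ioi 0)
  · intro x hx
    exact (entH_hasDeriv hx).continuousAt.continuousWithinAt
  · rw [interior_Ioi]
    intro x hx
    exact (entH_hasDeriv hx).differentiableAt.differentiableWithinAt
  · rw [interior_Ioi]
    intro x hx
    rw [(entH_hasDeriv hx).deriv]
    have := Real.one_sub_inv_le_log_of_pos hx
    have hx' : (0:ℝ) < x := hx
    have : 4*(x+1)*x⁻¹ = 4 + 4*x⁻¹ := by field_simp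
    rw [this]
    nlinarith [Real.one_sub_inv_le_log_of_pos hx']

private lemma entH_one : entH 1 = 0 := by simp [entH]

private lemma entG_hasDeriv {u : ℝ} (hu : 0 < u) : HasDerivAt entG (entH u) u := by
  have hlog : HasDerivAt (fun u : ℝ => u * Real.log u - u + 1) (Real.log u) u := by
    have h1 : HasDerivAt (fun u : ℝ => u * Real.log u) (Real.log u + 1) u := by
      have := (hasDerivAt_id u).mul (Real.hasDerivAt_log hu.ne')
      refine this.congr_deriv ?_
      simp [hu.ne']
    simpa using (h1.sub (hasDerivAt_id u)).add_const 1
  have h2 : HasDerivAt (fun u : ℝ => 2*u+4) 2 u := by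
    simpa using ((hasDerivAt_id u).const_mul (2:ℝ)).add_const 4
  have h3 := h2.mul hlog
  have h4 : HasDerivAt (fun u : ℝ => 3*(u-1)^2) (3*(2*(u-1))) u := by
    simpa using (((hasDerivAt_id u).sub_const 1).pow 2).const_mul (3:ℝ)
  have h5 := h3.sub h4
  refine h5.congr_deriv ?_
  unfold entH
  ring

private lemma entG_contOn : ContinuousOn entG {x : ℝ | x ≠ 0} := by
  unfold entG
  apply ContinuousOn.sub
  · apply ContinuousOn.mul (by fun_prop)
    apply ContinuousOn.add
    apply ContinuousOn.sub
    · exact continuousOn_id.mul Real.continuousOn_log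
    · fun_prop
    · fun_prop
  · fun_prop

private lemma entG_one : entG 1 = 0 := by simp [entG]

private lemma entG_nonneg {u : ℝ} (hu : 0 ≤ u) : 0 ≤ entG u := by
  rcases hu.eq_or_lt with h | h
  · simp [entG, ← h, Real.log_zero]; norm_num
  rcases le_or_gt 1 u with h1 | h1
  · have hmono : MonotoneOn entG (Set.Ici 1) := by
      apply monotoneOn_of_deriv_nonneg (convex_Ici 1)
      · exact entG_contOn.mono (by intro x hx; simp at hx ⊢; intro h0; rw [h0] at hx; linarith)
      · rw [interior_Ici]
        intro x hx
        exact (entG_hasDeriv (by linarith [Set.mem_Ioi.mp hx])).differentiableAt.differentiableWithinAt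
      · rw [interior_Ici]
        intro x hx
        have hx1 : (1:ℝ) < x := hx
        rw [(entG_hasDeriv (by linarith)).deriv]
        have := entH_mono (Set.mem_Ioi.mpr one_pos) (Set.mem_Ioi.mpr (by linarith : (0:ℝ) < x)) hx1.le
        rw [entH_one] at this
        exact this
    have := hmono (Set.mem_Ici.mpr le_rfl) (Set.mem_Ici.mpr h1) h1
    rw [entG_one] at this
    exact this
  · have hanti : AntitoneOn entG (Set.Ioc 0 1) := by
      apply antitoneOn_of_deriv_nonpos (convex_Ioc 0 1)
      · exact entG_contOn.mono (by intro x hx; simp at hx ⊢; intro h0; rw [h0] at hx; exact lt_irrefl 0 hx.1)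
      · rw [interior_Ioc]
        intro x hx
        exact (entG_hasDeriv hx.1).differentiableAt.differentiableWithinAt
      · rw [interior_Ioc]
        intro x hx
        rw [(entG_hasDeriv hx.1).deriv]
        have := entH_mono (Set.mem_Ioi.mpr hx.1) (Set.mem_Ioi.mpr one_pos) hx.2.le
        rw [entH_one] at this
        exact this
    have := hanti (Set.mem_Ioc.mpr ⟨h, h1.le⟩) (Set.mem_Ioc.mpr ⟨one_pos, le_rfl⟩) h1.le
    rw [entG_one] at this
    exact this

/-- Key pointwise inequality (Pinsker-type): `3(u−1)² ≤ (2u+4)(u ln u − u + 1)` for `u ≥ 0`. -/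
private lemma ent_key {u : ℝ} (hu : 0 ≤ u) :
    3*(u-1)^2 ≤ (2*u+4)*(u*Real.log u - u + 1) := by
  have := entG_nonneg hu
  unfold entG at this
  linarith

-- part (i) pointwise: 2(x − √m√x) ≤ x log x − x log m for x ≥ 0, m > 0
private lemma ent_pt_i {x m : ℝ} (hx : 0 ≤ x) (hm : 0 < m) :
    2*(x - Real.sqrt m * Real.sqrt x) ≤ x*Real.log x - x*Real.log m := by
  rcases hx.eq_or_lt with h | h
  · simp [← h]
  · set s := Real.sqrt x with hs
    set t := Real.sqrt m with ht
    have hs0 : 0 < s := Real.sqrt_pos.mpr h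
    have ht0 : 0 < t := Real.sqrt_pos.mpr hm
    have hx2 : x = s^2 := (Real.sq_sqrt hx).symm
    have hm2 : m = t^2 := (Real.sq_sqrt hm.le).symm
    have hlogx : Real.log x = 2*Real.log s := by
      rw [hx2, Real.log_pow]; push_cast; ring
    have hlogm : Real.log m = 2*Real.log t := by
      rw [hm2, Real.log_pow]; push_cast; ring
    have key : 1 - t/s ≤ Real.log s - Real.log t := by
      have := Real.one_sub_inv_le_log_of_pos (div_pos hs0 ht0)
      rwa [Real.log_div hs0.ne' ht0.ne', inv_div] at this
    have h2 : s^2*(1 - t/s) ≤ s^2*(Real.log s - Real.log t) :=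
      mul_le_mul_of_nonneg_left key (sq_nonneg s)
    have h3 : s^2*(1 - t/s) = s^2 - s*t := by field_simp
    rw [hlogx, hlogm, hx2]
    nlinarith [h2, h3]


-- AM-GM form: |u-1| ≤ l(2u+4)/6 + φ(u)/(2l) for l > 0
private lemma ent_pt_ii {u l : ℝ} (hu : 0 ≤ u) (hl : 0 < l) :
    |u - 1| ≤ l*(2*u+4)/6 + (u*Real.log u - u + 1)/(2*l) := by
  set p := u*Real.log u - u + 1 with hp
  have hk := ent_key hu
  have hpos : (0:ℝ) < 2*u+4 := by linarith
  have habs : |u-1|^2 = (u-1)^2 := sq_abs _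
  have key2 : 6*l*|u-1| ≤ l^2*(2*u+4) + 3*p := by
    have h6 : 0 ≤ (l*(2*u+4) - 3*|u-1|)^2 := sq_nonneg _
    nlinarith [h6, habs, hk, hpos, mul_pos hl hpos]
  have heq : l*(2*u+4)/6 + p/(2*l) = (l^2*(2*u+4) + 3*p)/(6*l) := by
    field_simp; ring
  rw [heq, le_div_iff₀ (by positivity)]
  linarith [key2]


/-- lower bounds on the entropy functional for a nonnegative integrable
random variable `X` with `E[X ln X]` finite (convention `0 ln 0 = 0`) and `E[X] > 0`:
(i) `Ent(X) ≥ 2(E[X] − √(E[X])·E[√X]) ≥ Var(√X) = E[X] − (E[√X])²`;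
(ii) `Ent(X) ≥ (1/2)·E[X]·(E|X/E[X] − 1|)²`. -/
theorem ent_lower_bounds {Ω : Type*} [MeasurableSpace Ω] (μ : Measure Ω)
    [IsProbabilityMeasure μ] (X : Ω → ℝ)
    (hX0 : ∀ ω, 0 ≤ X ω)
    (hX1 : Integrable X μ)
    (hXlog : Integrable (fun ω => X ω * Real.log (X ω)) μ)
    (hEX : 0 < ∫ ω, X ω ∂μ) :
    (2 * ((∫ ω, X ω ∂μ) - Real.sqrt (∫ ω, X ω ∂μ) * ∫ ω, Real.sqrt (X ω) ∂μ) ≤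
        (∫ ω, X ω * Real.log (X ω) ∂μ) - (∫ ω, X ω ∂μ) * Real.log (∫ ω, X ω ∂μ) ∧
      (∫ ω, X ω ∂μ) - (∫ ω, Real.sqrt (X ω) ∂μ) ^ 2 ≤
        2 * ((∫ ω, X ω ∂μ) - Real.sqrt (∫ ω, X ω ∂μ) * ∫ ω, Real.sqrt (X ω) ∂μ)) ∧
    (1 / 2) * (∫ ω, X ω ∂μ) * (∫ ω, |X ω / (∫ ω', X ω' ∂μ) - 1| ∂μ) ^ 2 ≤
      (∫ ω, X ω * Real.log (X ω) ∂μ) - (∫ ω, X ω ∂μ) * Real.log (∫ ω, X ω ∂μ) := by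
  set m := ∫ ω, X ω ∂μ with hm
  -- integrability of √X
  have hsqm : AEStronglyMeasurable (fun ω => Real.sqrt (X ω)) μ :=
    Real.continuous_sqrt.comp_aestronglyMeasurable hX1.1
  have hsqrtInt : Integrable (fun ω => Real.sqrt (X ω)) μ := by
    apply Integrable.mono' (hX1.add (integrable_const 1)) hsqm
    filter_upwards with ω
    simp only [Pi.add_apply]
    rw [Real.norm_eq_abs, abs_of_nonneg (Real.sqrt_nonneg _)]
    nlinarith [sq_nonneg (Real.sqrt (X ω) - 1), Real.sq_sqrt (hX0 ω),
      Real.sqrt_nonneg (X ω)]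
  -- first inequality of (i)
  have hIneq1 : 2 * (m - Real.sqrt m * ∫ ω, Real.sqrt (X ω) ∂μ) ≤
      (∫ ω, X ω * Real.log (X ω) ∂μ) - m * Real.log m := by
    have hLHSint : Integrable (fun ω => 2*(X ω - Real.sqrt m * Real.sqrt (X ω))) μ :=
      (hX1.sub (hsqrtInt.const_mul _)).const_mul 2
    have hRHSint : Integrable (fun ω => X ω * Real.log (X ω) - X ω * Real.log m) μ :=
      hXlog.sub (hX1.mul_const _)
    have h := integral_mono hLHSint hRHSint (fun ω => ent_pt_i (hX0 ω) hEX)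
    rw [integral_const_mul, integral_sub hX1 (hsqrtInt.const_mul _), integral_const_mul,
      integral_sub hXlog (hX1.mul_const _), integral_mul_const] at h
    exact h
  refine ⟨⟨hIneq1, ?_⟩, ?_⟩
  · nlinarith [sq_nonneg (Real.sqrt m - ∫ ω, Real.sqrt (X ω) ∂μ), Real.sq_sqrt hEX.le]
  · set Ent := (∫ ω, X ω * Real.log (X ω) ∂μ) - m * Real.log m with hEnt
    -- the function φ(u) with u = X/m
    set φ : Ω → ℝ := fun ω => (X ω/m)*Real.log (X ω/m) - X ω/m + 1 with hφ
    have hφ_eq : φ = fun ω => (X ω * Real.log (X ω))/m - X ω * Real.log m/m - X ω/m + 1 := by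
      funext ω
      rcases (hX0 ω).eq_or_lt with h | h
      · simp [hφ, ← h]
      · rw [hφ]
        simp only
        rw [Real.log_div h.ne' hEX.ne']
        field_simp
    have hφint : Integrable φ μ := by
      rw [hφ_eq]
      exact (((hXlog.div_const m).sub ((hX1.mul_const _).div_const m)).sub
        (hX1.div_const m)).add (integrable_const 1)
    have i1 : Integrable (fun ω => X ω * Real.log (X ω) / m) μ := hXlog.div_const m
    have i2 : Integrable (fun ω => X ω * Real.log m / m) μ := (hX1.mul_const _).div_const m
    have i3 : Integrable (fun ω => X ω / m) μ := hX1.div_const m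
    have i12 : Integrable (fun ω => X ω * Real.log (X ω) / m - X ω * Real.log m / m) μ := i1.sub i2
    have i123 : Integrable
        (fun ω => X ω * Real.log (X ω) / m - X ω * Real.log m / m - X ω / m) μ := i12.sub i3
    have hφ_integral : ∫ ω, φ ω ∂μ = Ent/m := by
      have : ∫ ω, φ ω ∂μ = (∫ ω, X ω * Real.log (X ω) ∂μ)/m - m * Real.log m/m - m/m + 1 := by
        rw [hφ_eq]
        rw [integral_add i123 (integrable_const 1), integral_sub i12 i3, integral_sub i1 i2,
          integral_div, integral_div, integral_div, integral_mul_const, integral_const]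
        simp [measure_univ, ← hm]
      rw [this, hEnt]
      field_simp
      ring
    have hφ_nonneg : ∀ ω, 0 ≤ φ ω := by
      intro ω
      have hu : 0 ≤ X ω/m := div_nonneg (hX0 ω) hEX.le
      rcases hu.eq_or_lt with h | h
      · simp [hφ, ← h]
      · have := Real.one_sub_inv_le_log_of_pos h
        have hx : 0 < X ω := by
          have h5 := mul_pos h hEX
          rwa [div_mul_cancel₀ _ hEX.ne'] at h5
        rw [hφ]
        simp only
        have h2 : (X ω/m) * (1 - (X ω/m)⁻¹) ≤ (X ω/m) * Real.log (X ω/m) :=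
          mul_le_mul_of_nonneg_left this hu
        have h3 : (X ω/m) * (1 - (X ω/m)⁻¹) = X ω/m - 1 := by
          field_simp
        linarith
    have hEnt_nonneg : 0 ≤ Ent := by
      have h0 : 0 ≤ ∫ ω, φ ω ∂μ := integral_nonneg hφ_nonneg
      rw [hφ_integral] at h0
      have := mul_nonneg h0 hEX.le
      rwa [div_mul_cancel₀ _ hEX.ne'] at this
    set a := ∫ ω, |X ω / m - 1| ∂μ with ha
    have ha0 : 0 ≤ a := integral_nonneg (fun ω => abs_nonneg _)
    rcases ha0.eq_or_lt with haz | hap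
    · rw [← haz]
      simpa using hEnt_nonneg
    · set l := a/2 with hlval
      have hl : 0 < l := by positivity
      have hpt : ∀ ω, |X ω/m - 1| ≤ l*(2*(X ω/m)+4)/6 + φ ω/(2*l) := fun ω =>
        ent_pt_ii (div_nonneg (hX0 ω) hEX.le) hl
      have habsint : Integrable (fun ω => |X ω/m - 1|) μ :=
        ((hX1.div_const m).sub (integrable_const 1)).abs
      have hrw : (fun ω => l*(2*(X ω/m)+4)/6 + φ ω/(2*l)) =
          fun ω => ((l/(3*m)) * X ω + 2*l/3) + φ ω * (1/(2*l)) := by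
        funext ω
        field_simp
        ring
      have j1 : Integrable (fun ω => l/(3*m) * X ω) μ := hX1.const_mul _
      have j2 : Integrable (fun ω => l/(3*m) * X ω + 2*l/3) μ := j1.add (integrable_const _)
      have j3 : Integrable (fun ω => φ ω * (1/(2*l))) μ := hφint.mul_const _
      have hRint : Integrable (fun ω => l*(2*(X ω/m)+4)/6 + φ ω/(2*l)) μ := by
        rw [hrw]
        exact j2.add j3
      have hmono := integral_mono habsint hRint hpt
      rw [hrw, integral_add j2 j3, integral_add j1 (integrable_const _), integral_const_mul,
        integral_mul_const, integral_const, hφ_integral] at hmono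
      simp only [measure_univ, ENNReal.toReal_one, smul_eq_mul, one_mul, probReal_univ, ← ha] at hmono
      -- hmono : a ≤ (l/(3*m))*m + 2*l/3 + (Ent/m)*(1/(2*l))
      have h1 : (l/(3*m))*m = l/3 := by field_simp
      have h2 : (Ent/m)*(1/(2*l)) = Ent/(m*a) := by
        rw [hlval]; field_simp
      rw [h1, h2] at hmono
      -- a ≤ l/3 + 2l/3 + Ent/(m a) = a/2 + Ent/(m a)
      have h3 : a/2 ≤ Ent/(m*a) := by rw [hlval] at hmono; linarith
      have h4 : (a/2)*(m*a) ≤ Ent := by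
        have := mul_le_mul_of_nonneg_right h3 (le_of_lt (by positivity : 0 < m*a))
        rwa [div_mul_cancel₀ _ (by positivity : m*a ≠ 0)] at this
      nlinarith [h4]
end

section
/- Let r ≥ 1 be an integer, let x_0 < x_1 < … < x_r be integers, and let f : ℤ → ℝ be any function. Then the divided difference satisfies |f[x_0, x_1, …, x_r]| ≤ (1/r!) · max { |Δ^r f(x)| : x ∈ ℤ, x_0 ≤ x ≤ x_r }, where Δ^r f(x) = Σ_{k=0}^r (−1)^k (r choose k) f(x − k) is the r-th order backward difference. -/
open Finset

/-- Divided difference of `g` over the finite set `S` of integer nodes. -/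
noncomputable def dd (S : Finset ℤ) (g : ℤ → ℝ) : ℝ :=
  ∑ a ∈ S, g a / ∏ b ∈ S.erase a, ((a : ℝ) - (b : ℝ))

/-- `r`-th backward difference. -/
noncomputable def bdiff (r : ℕ) (g : ℤ → ℝ) (z : ℤ) : ℝ :=
  ∑ k ∈ Finset.range (r + 1), (-1 : ℝ) ^ k * (r.choose k : ℝ) * g (z - k)

lemma dd_prod_ne_zero (S : Finset ℤ) (a : ℤ) :
    (∏ b ∈ S.erase a, ((a : ℝ) - (b : ℝ))) ≠ 0 := by
  refine Finset.prod_ne_zero_iff.2 fun b hb => ?_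
  have hba : b ≠ a := Finset.ne_of_mem_erase hb
  have : (a : ℝ) ≠ (b : ℝ) := by exact_mod_cast fun h => hba (by exact_mod_cast h.symm)
  exact sub_ne_zero.2 this

lemma dd_erase_expand (S : Finset ℤ) (g : ℤ → ℝ) (b : ℤ) (hb : b ∈ S) :
    dd (S.erase b) g
      = ∑ c ∈ S, g c * (((c : ℝ) - (b : ℝ)) / ∏ d ∈ S.erase c, ((c : ℝ) - (d : ℝ))) := by
  rw [← Finset.add_sum_erase _ _ hb, sub_self, zero_div, mul_zero, zero_add, dd]
  refine Finset.sum_congr rfl fun c hc => ?_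
  have hcb : c ≠ b := Finset.ne_of_mem_erase hc
  have hcS : c ∈ S := Finset.mem_of_mem_erase hc
  have hbc : b ∈ S.erase c := Finset.mem_erase.2 ⟨hcb.symm, hb⟩
  have hne : ((c : ℝ) - (b : ℝ)) ≠ 0 := by
    have : (c : ℝ) ≠ (b : ℝ) := by exact_mod_cast hcb
    exact sub_ne_zero.2 this
  rw [← Finset.mul_prod_erase _ _ hbc, Finset.erase_right_comm,
    div_mul_eq_div_div, div_self hne, mul_one_div]

lemma dd_erase_sub (S : Finset ℤ) (g : ℤ → ℝ) (a b : ℤ) (ha : a ∈ S) (hb : b ∈ S) :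
    dd (S.erase b) g - dd (S.erase a) g = ((a : ℝ) - (b : ℝ)) * dd S g := by
  rw [dd_erase_expand S g b hb, dd_erase_expand S g a ha, ← Finset.sum_sub_distrib, dd,
    Finset.mul_sum]
  refine Finset.sum_congr rfl fun c hc => ?_
  have hP := dd_prod_ne_zero S c
  field_simp
  ring

lemma prod_range_cast_sub (i : ℕ) :
    ∏ j ∈ Finset.range i, ((i : ℝ) - (j : ℝ)) = i.factorial := by
  induction i with
  | zero => simp
  | succ n ih =>
    rw [Finset.prod_range_succ']
    have h1 : ∀ j ∈ Finset.range n, (((n + 1 : ℕ) : ℝ) - ((j + 1 : ℕ) : ℝ)) = (n : ℝ) - (j : ℝ) := by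
      intro j _; push_cast; ring
    rw [Finset.prod_congr rfl h1, ih, Nat.factorial_succ]
    push_cast
    ring

lemma prod_range_cast_add_one (n : ℕ) :
    ∏ k ∈ Finset.range n, ((k : ℝ) + 1) = n.factorial := by
  induction n with
  | zero => simp
  | succ n ih => rw [Finset.prod_range_succ, ih, Nat.factorial_succ]; push_cast; ring

lemma prod_erase_range (r i : ℕ) (hi : i ≤ r) :
    ∏ j ∈ (Finset.range (r + 1)).erase i, ((i : ℝ) - (j : ℝ))
      = (-1 : ℝ) ^ (r - i) * i.factorial * (r - i).factorial := by
  have hset : (Finset.range (r + 1)).erase i = Finset.range i ∪ Finset.Ico (i + 1) (r + 1) := by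
    ext j
    simp only [Finset.mem_erase, Finset.mem_range, Finset.mem_union, Finset.mem_Ico]
    omega
  have hdisj : Disjoint (Finset.range i) (Finset.Ico (i + 1) (r + 1)) := by
    rw [Finset.disjoint_left]
    intro j hj hj2
    simp only [Finset.mem_range] at hj
    simp only [Finset.mem_Ico] at hj2
    omega
  rw [hset, Finset.prod_union hdisj, prod_range_cast_sub]
  have h2 : ∏ j ∈ Finset.Ico (i + 1) (r + 1), ((i : ℝ) - (j : ℝ))
      = (-1 : ℝ) ^ (r - i) * (r - i).factorial := by
    rw [Finset.prod_Ico_eq_prod_range, show r + 1 - (i + 1) = r - i from by omega]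
    have h3 : ∀ k ∈ Finset.range (r - i), ((i : ℝ) - ((i + 1 + k : ℕ) : ℝ))
        = (-1) * (((k : ℕ) : ℝ) + 1) := by intro k _; push_cast; ring
    rw [Finset.prod_congr rfl h3, Finset.prod_mul_distrib, Finset.prod_const,
      prod_range_cast_add_one, Finset.card_range]
  rw [h2]
  ring

lemma dd_Icc (r : ℕ) (m : ℤ) (g : ℤ → ℝ) :
    dd (Finset.Icc m (m + r)) g = bdiff r g (m + r) / r.factorial := by
  classical
  have hinj : Function.Injective (fun i : ℕ => m + (i : ℤ)) := by
    intro a b h; simpa using h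
  have himg : Finset.Icc m (m + r) = (Finset.range (r + 1)).image (fun i : ℕ => m + (i : ℤ)) := by
    ext a
    simp only [Finset.mem_Icc, Finset.mem_image, Finset.mem_range]
    constructor
    · rintro ⟨h1, h2⟩; exact ⟨(a - m).toNat, by omega, by omega⟩
    · rintro ⟨i, hi, rfl⟩; omega
  rw [himg, dd, Finset.sum_image (fun a _ b _ h => hinj h)]
  have hrefl : bdiff r g (m + (r : ℤ)) = ∑ i ∈ Finset.range (r + 1),
      (-1 : ℝ) ^ (r - i) * (r.choose (r - i) : ℝ) * g (m + (r : ℤ) - ((r - i : ℕ) : ℤ)) := by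
    rw [bdiff, ← Finset.sum_range_reflect]
    exact Finset.sum_congr rfl fun i hi => by rw [show r + 1 - 1 - i = r - i from by omega]
  rw [hrefl, Finset.sum_div]
  refine Finset.sum_congr rfl fun i hi => ?_
  have hir : i ≤ r := by simpa [Nat.lt_succ_iff] using hi
  have herase : ((Finset.range (r + 1)).image (fun i : ℕ => m + (i : ℤ))).erase (m + (i : ℤ))
      = ((Finset.range (r + 1)).erase i).image (fun i : ℕ => m + (i : ℤ)) :=
    (Finset.image_erase hinj _ _).symm
  rw [herase, Finset.prod_image (fun a _ b _ h => hinj h)]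
  have hprod : ∏ j ∈ (Finset.range (r + 1)).erase i,
      (((m + (i : ℤ) : ℤ) : ℝ) - ((m + (j : ℤ) : ℤ) : ℝ))
      = (-1 : ℝ) ^ (r - i) * i.factorial * (r - i).factorial := by
    rw [← prod_erase_range r i hir]
    refine Finset.prod_congr rfl fun j _ => ?_
    push_cast
    ring
  rw [hprod]
  have harg : m + (r : ℤ) - ((r - i : ℕ) : ℤ) = m + (i : ℤ) := by
    have : ((r - i : ℕ) : ℤ) = (r : ℤ) - (i : ℤ) := by
      rw [Nat.cast_sub hir]
    omega
  rw [harg, Nat.choose_symm hir]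
  have hfact : (r.factorial : ℝ) = (r.choose i : ℝ) * i.factorial * (r - i).factorial := by
    exact_mod_cast (Nat.choose_mul_factorial_mul_factorial hir).symm
  have hi0 : (i.factorial : ℝ) ≠ 0 := by positivity
  have hri0 : ((r - i).factorial : ℝ) ≠ 0 := by positivity
  have hch : (r.choose i : ℝ) ≠ 0 := by
    have := Nat.choose_pos hir; positivity
  rcases neg_one_pow_eq_or ℝ (r - i) with h | h <;>
    rw [h, hfact] <;> field_simp <;> ring

noncomputable def qq (r : ℕ) (t : ℤ) : ℝ :=
  (∏ i ∈ Finset.range r, ((t : ℝ) - (i : ℝ))) / r.factorial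

lemma qq_sub (r : ℕ) (t : ℤ) : qq (r + 1) t - qq (r + 1) (t - 1) = qq r (t - 1) := by
  unfold qq
  rw [Finset.prod_range_succ' (fun i : ℕ => ((t : ℝ) - (i : ℝ))),
    Finset.prod_range_succ (fun i : ℕ => (((t - 1 : ℤ) : ℝ) - (i : ℝ)))]
  have h1 : ∀ j ∈ Finset.range r, ((t : ℝ) - ((j + 1 : ℕ) : ℝ)) = (((t - 1 : ℤ) : ℝ) - (j : ℝ)) := by
    intro j _; push_cast; ring
  rw [Finset.prod_congr rfl h1]
  have hf : ((r + 1).factorial : ℝ) = ((r : ℝ) + 1) * r.factorial := by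
    rw [Nat.factorial_succ]; push_cast; ring
  rw [hf]
  have h0 : (r.factorial : ℝ) ≠ 0 := by positivity
  have h0' : ((r : ℝ) + 1) ≠ 0 := by positivity
  field_simp
  push_cast
  ring

lemma bdiff_succ (r : ℕ) (g : ℤ → ℝ) (z : ℤ) :
    bdiff (r + 1) g z = bdiff r g z - bdiff r g (z - 1) := by
  unfold bdiff
  rw [Finset.sum_range_succ' (fun k : ℕ => (-1 : ℝ) ^ k * ((r + 1).choose k : ℝ) * g (z - k))]
  have hsplit : ∀ k ∈ Finset.range (r + 1),
      (-1 : ℝ) ^ (k + 1) * ((r + 1).choose (k + 1) : ℝ) * g (z - (k + 1 : ℕ))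
        = -((-1 : ℝ) ^ k * (r.choose k : ℝ) * g (z - 1 - k))
          + (-1 : ℝ) ^ (k + 1) * (r.choose (k + 1) : ℝ) * g (z - (k + 1 : ℕ)) := by
    intro k _
    have harg : z - ((k + 1 : ℕ) : ℤ) = z - 1 - k := by push_cast; ring
    rw [Nat.choose_succ_succ, harg]
    push_cast
    ring
  rw [Finset.sum_congr rfl hsplit, Finset.sum_add_distrib]
  have hA : ∑ k ∈ Finset.range (r + 1), -((-1 : ℝ) ^ k * (r.choose k : ℝ) * g (z - 1 - k))
      = -∑ k ∈ Finset.range (r + 1), (-1 : ℝ) ^ k * (r.choose k : ℝ) * g (z - 1 - k) := by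
    rw [Finset.sum_neg_distrib]
  have hB : (∑ k ∈ Finset.range (r + 1),
        (-1 : ℝ) ^ (k + 1) * (r.choose (k + 1) : ℝ) * g (z - (k + 1 : ℕ)))
        + (-1 : ℝ) ^ 0 * ((r + 1).choose 0 : ℝ) * g (z - (0 : ℕ))
      = ∑ k ∈ Finset.range (r + 1), (-1 : ℝ) ^ k * (r.choose k : ℝ) * g (z - k) := by
    have h2 : ∑ k ∈ Finset.range (r + 1),
        (-1 : ℝ) ^ (k + 1) * (r.choose (k + 1) : ℝ) * g (z - (k + 1 : ℕ))
        = ∑ k ∈ Finset.range r,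
        (-1 : ℝ) ^ (k + 1) * (r.choose (k + 1) : ℝ) * g (z - (k + 1 : ℕ)) := by
      rw [Finset.sum_range_succ, Nat.choose_succ_self]
      simp
    rw [h2]
    rw [Finset.sum_range_succ' (fun k : ℕ => (-1 : ℝ) ^ k * (r.choose k : ℝ) * g (z - k))]
    simp
  linarith [hA, hB]

lemma dd_neg (S : Finset ℤ) (g : ℤ → ℝ) : dd S (fun t => -g t) = -dd S g := by
  simp [dd, neg_div, Finset.sum_neg_distrib]

lemma dd_sub (S : Finset ℤ) (g h : ℤ → ℝ) :
    dd S (fun t => g t - h t) = dd S g - dd S h := by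
  simp [dd, sub_div, Finset.sum_sub_distrib]

lemma dd_add (S : Finset ℤ) (g h : ℤ → ℝ) :
    dd S (fun t => g t + h t) = dd S g + dd S h := by
  simp [dd, add_div, Finset.sum_add_distrib]

lemma dd_smul (S : Finset ℤ) (c : ℝ) (g : ℤ → ℝ) :
    dd S (fun t => c * g t) = c * dd S g := by
  simp [dd, Finset.mul_sum, mul_div_assoc]

lemma bdiff_neg (r : ℕ) (g : ℤ → ℝ) (z : ℤ) : bdiff r (fun t => -g t) z = -bdiff r g z := by
  simp [bdiff, Finset.sum_neg_distrib]

lemma bdiff_sub (r : ℕ) (g h : ℤ → ℝ) (z : ℤ) :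
    bdiff r (fun t => g t - h t) z = bdiff r g z - bdiff r h z := by
  simp [bdiff, mul_sub, Finset.sum_sub_distrib]

lemma bdiff_add (r : ℕ) (g h : ℤ → ℝ) (z : ℤ) :
    bdiff r (fun t => g t + h t) z = bdiff r g z + bdiff r h z := by
  simp [bdiff, mul_add, Finset.sum_add_distrib]

lemma bdiff_smul (r : ℕ) (c : ℝ) (g : ℤ → ℝ) (z : ℤ) :
    bdiff r (fun t => c * g t) z = c * bdiff r g z := by
  simp only [bdiff, Finset.mul_sum]
  exact Finset.sum_congr rfl fun k _ => by ring

lemma bdiff_shift (r : ℕ) (g : ℤ → ℝ) (z : ℤ) :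
    bdiff r (fun t => g (t - 1)) z = bdiff r g (z - 1) := by
  unfold bdiff
  refine Finset.sum_congr rfl fun k _ => ?_
  rw [sub_right_comm]

lemma bdiff_qq (r : ℕ) (z : ℤ) : bdiff r (qq r) z = 1 := by
  induction r generalizing z with
  | zero => simp [bdiff, qq]
  | succ r ih =>
    rw [bdiff_succ]
    have h1 : bdiff r (qq (r + 1)) (z - 1) = bdiff r (fun t => qq (r + 1) (t - 1)) z :=
      (bdiff_shift r (qq (r + 1)) z).symm
    rw [h1, ← bdiff_sub]
    have h2 : (fun t => qq (r + 1) t - qq (r + 1) (t - 1)) = fun t => qq r (t - 1) :=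
      funext (qq_sub r)
    rw [h2, bdiff_shift, ih]

lemma dd_ge_base (r : ℕ) (S : Finset ℤ) (hS : S.Nonempty) (hcard : S.card = r + 1)
    (hMm : S.max' hS - S.min' hS = (r : ℤ)) (g : ℤ → ℝ) (c : ℝ)
    (hc : ∀ z : ℤ, S.min' hS ≤ z → z ≤ S.max' hS → c ≤ bdiff r g z) :
    c / r.factorial ≤ dd S g := by
  have hsub : S ⊆ Finset.Icc (S.min' hS) (S.max' hS) := fun a ha =>
    Finset.mem_Icc.2 ⟨S.min'_le a ha, S.le_max' a ha⟩
  have hIcc : S = Finset.Icc (S.min' hS) (S.max' hS) := by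
    refine Finset.eq_of_subset_of_card_le hsub ?_
    rw [Int.card_Icc, hcard]
    omega
  have hM : S.max' hS = S.min' hS + (r : ℤ) := by omega
  have hz := hc (S.max' hS) (by omega) le_rfl
  rw [hM] at hz
  calc c / r.factorial ≤ bdiff r g (S.min' hS + (r : ℤ)) / r.factorial := by
        have : (0 : ℝ) < r.factorial := by positivity
        gcongr
    _ = dd (Finset.Icc (S.min' hS) (S.min' hS + (r : ℤ))) g := (dd_Icc r _ g).symm
    _ = dd S g := by
        conv_rhs => rw [hIcc]
        rw [hM]

/-- Main induction: lower bound for divided differences from lower bound on backward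
differences. -/
lemma dd_ge (r : ℕ) (n : ℕ) :
    ∀ (S : Finset ℤ) (hS : S.Nonempty), S.card = r + 1 →
      (S.max' hS - S.min' hS).toNat ≤ n → ∀ (g : ℤ → ℝ) (c : ℝ),
      (∀ z : ℤ, S.min' hS ≤ z → z ≤ S.max' hS → c ≤ bdiff r g z) →
      c / r.factorial ≤ dd S g := by
  induction n with
  | zero =>
    intro S hS hcard hw g c hc
    have hsub : S ⊆ Finset.Icc (S.min' hS) (S.max' hS) := fun a ha =>
      Finset.mem_Icc.2 ⟨S.min'_le a ha, S.le_max' a ha⟩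
    have hcard2 : S.card ≤ (Finset.Icc (S.min' hS) (S.max' hS)).card := Finset.card_le_card hsub
    rw [Int.card_Icc, hcard] at hcard2
    exact dd_ge_base r S hS hcard (by omega) g c hc
  | succ n ih =>
    intro S hS hcard hw g c hc
    have hmM : S.min' hS ≤ S.max' hS := S.min'_le _ (S.max'_mem hS)
    have hsub : S ⊆ Finset.Icc (S.min' hS) (S.max' hS) := fun a ha =>
      Finset.mem_Icc.2 ⟨S.min'_le a ha, S.le_max' a ha⟩
    have hcard2 : S.card ≤ (Finset.Icc (S.min' hS) (S.max' hS)).card := Finset.card_le_card hsub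
    rw [Int.card_Icc, hcard] at hcard2
    by_cases hconsec : S.max' hS - S.min' hS = (r : ℤ)
    · exact dd_ge_base r S hS hcard hconsec g c hc
    · -- there is a missing integer point strictly between min and max
      have hlt : S.card < (Finset.Icc (S.min' hS) (S.max' hS)).card := by
        rw [Int.card_Icc, hcard]; omega
      obtain ⟨y, hyI, hyS⟩ := Finset.exists_of_ssubset
        (Finset.ssubset_iff_subset_ne.2 ⟨hsub, fun h => by
          have h2 := congrArg Finset.card h
          omega⟩)
      rw [Finset.mem_Icc] at hyI
      have hym : S.min' hS < y :=
        lt_of_le_of_ne hyI.1 (fun h => hyS (h ▸ S.min'_mem hS))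
      have hyM : y < S.max' hS :=
        lt_of_le_of_ne hyI.2 (fun h => hyS (h ▸ S.max'_mem hS))
      set m := S.min' hS with hm
      set M := S.max' hS with hMdef
      set S' := insert y S with hS'
      have hy' : y ∈ S' := Finset.mem_insert_self y S
      have hm' : m ∈ S' := Finset.mem_insert_of_mem (S.min'_mem hS)
      have hM' : M ∈ S' := Finset.mem_insert_of_mem (S.max'_mem hS)
      have hcard' : S'.card = r + 2 := by
        rw [hS', Finset.card_insert_of_notMem hyS, hcard]
      have hSey : S'.erase y = S := Finset.erase_insert hyS
      have E1 := dd_erase_sub S' g y m hy' hm'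
      have E2 := dd_erase_sub S' g y M hy' hM'
      rw [hSey] at E1 E2
      -- bounds on elements of S'
      have hS'bound : ∀ a ∈ S', m ≤ a ∧ a ≤ M := by
        intro a ha
        rcases Finset.mem_insert.1 ha with rfl | ha
        · exact ⟨hyI.1, hyI.2⟩
        · exact ⟨S.min'_le a ha, S.le_max' a ha⟩
      -- child A
      have hAne : (S'.erase m).Nonempty := by
        rw [← Finset.card_pos, Finset.card_erase_of_mem hm', hcard']; omega
      have hAcard : (S'.erase m).card = r + 1 := by
        rw [Finset.card_erase_of_mem hm', hcard']
        omega
      have hAmin : m < (S'.erase m).min' hAne := by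
        have hmem := (S'.erase m).min'_mem hAne
        have h1 := (hS'bound _ (Finset.mem_of_mem_erase hmem)).1
        have h2 : (S'.erase m).min' hAne ≠ m := Finset.ne_of_mem_erase hmem
        omega
      have hAmax : (S'.erase m).max' hAne ≤ M := by
        apply Finset.max'_le
        intro a ha
        exact (hS'bound _ (Finset.mem_of_mem_erase ha)).2
      have hAminmax : (S'.erase m).min' hAne ≤ (S'.erase m).max' hAne :=
        (S'.erase m).min'_le _ ((S'.erase m).max'_mem hAne)
      have hA : c / r.factorial ≤ dd (S'.erase m) g := by
        refine ih (S'.erase m) hAne hAcard (by omega) g c fun z hz1 hz2 => ?_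
        exact hc z (by omega) (by omega)
      -- child B
      have hBne : (S'.erase M).Nonempty := by
        rw [← Finset.card_pos, Finset.card_erase_of_mem hM', hcard']; omega
      have hBcard : (S'.erase M).card = r + 1 := by
        rw [Finset.card_erase_of_mem hM', hcard']
        omega
      have hBmax : (S'.erase M).max' hBne < M := by
        have hmem := (S'.erase M).max'_mem hBne
        have h1 := (hS'bound _ (Finset.mem_of_mem_erase hmem)).2
        have h2 : (S'.erase M).max' hBne ≠ M := Finset.ne_of_mem_erase hmem
        omega
      have hBmin : m ≤ (S'.erase M).min' hBne := by
        have hmem := (S'.erase M).min'_mem hBne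
        exact (hS'bound _ (Finset.mem_of_mem_erase hmem)).1
      have hBminmax : (S'.erase M).min' hBne ≤ (S'.erase M).max' hBne :=
        (S'.erase M).min'_le _ ((S'.erase M).max'_mem hBne)
      have hB : c / r.factorial ≤ dd (S'.erase M) g := by
        refine ih (S'.erase M) hBne hBcard (by omega) g c fun z hz1 hz2 => ?_
        exact hc z (by omega) (by omega)
      -- combine
      have hαpos : (0 : ℝ) < (M : ℝ) - (y : ℝ) := by
        have : (y : ℝ) < (M : ℝ) := by exact_mod_cast hyM
        linarith
      have hβpos : (0 : ℝ) < (y : ℝ) - (m : ℝ) := by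
        have : (m : ℝ) < (y : ℝ) := by exact_mod_cast hym
        linarith
      have key : ((M : ℝ) - (m : ℝ)) * dd S g
          = ((M : ℝ) - (y : ℝ)) * dd (S'.erase m) g
            + ((y : ℝ) - (m : ℝ)) * dd (S'.erase M) g := by
        linear_combination (-((M : ℝ) - (y : ℝ))) * E1 + (-((y : ℝ) - (m : ℝ))) * E2
      have h5 : ((M : ℝ) - (m : ℝ)) * (c / r.factorial) ≤ ((M : ℝ) - (m : ℝ)) * dd S g := by
        nlinarith [mul_le_mul_of_nonneg_left hA hαpos.le, mul_le_mul_of_nonneg_left hB hβpos.le]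
      exact (mul_le_mul_iff_right₀ (by linarith : (0 : ℝ) < (M : ℝ) - (m : ℝ))).1 h5

lemma dd_ge' (r : ℕ) (S : Finset ℤ) (hS : S.Nonempty) (hcard : S.card = r + 1)
    (g : ℤ → ℝ) (c : ℝ)
    (h : ∀ z : ℤ, S.min' hS ≤ z → z ≤ S.max' hS → c ≤ bdiff r g z) :
    c / r.factorial ≤ dd S g :=
  dd_ge r (S.max' hS - S.min' hS).toNat S hS hcard le_rfl g c h

/-- mean value theorem for divided differences over integers:
`|f[x₀,…,x_r]| ≤ (1/r!)·max{|Δ^r f(x)| : x₀ ≤ x ≤ x_r}`, where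
`Δ^r f(x) = Σ_{k=0}^r (−1)^k C(r,k) f(x−k)` is the `r`-th backward difference. -/
theorem divided_difference_mean_value (r : ℕ) (hr : 1 ≤ r) (x : Fin (r + 1) → ℤ)
    (hx : StrictMono x) (f : ℤ → ℝ) :
    |∑ i, f (x i) / ∏ j ∈ Finset.univ.erase i, ((x i : ℝ) - (x j : ℝ))| ≤
      (1 / (r.factorial : ℝ)) *
        sSup {v : ℝ | ∃ z : ℤ, x 0 ≤ z ∧ z ≤ x (Fin.last r) ∧
          v = |∑ k ∈ Finset.range (r + 1), (-1 : ℝ) ^ k * (r.choose k : ℝ) * f (z - k)|} := by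
  classical
  have hinj : Function.Injective x := hx.injective
  set S : Finset ℤ := Finset.univ.image x with hSdef
  have hx0S : x 0 ∈ S := Finset.mem_image_of_mem x (Finset.mem_univ _)
  have hSne : S.Nonempty := ⟨x 0, hx0S⟩
  have hcard : S.card = r + 1 := by
    rw [hSdef, Finset.card_image_of_injective _ hinj, Finset.card_univ, Fintype.card_fin]
  have hmin : S.min' hSne = x 0 := by
    refine le_antisymm (Finset.min'_le _ _ hx0S) (Finset.le_min' _ _ _ ?_)
    intro a ha
    obtain ⟨i, _, rfl⟩ := Finset.mem_image.1 ha
    exact hx.monotone (Fin.zero_le i)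
  have hmax : S.max' hSne = x (Fin.last r) := by
    refine le_antisymm (Finset.max'_le _ _ _ ?_)
      (Finset.le_max' _ _ (Finset.mem_image_of_mem x (Finset.mem_univ _)))
    intro a ha
    obtain ⟨i, _, rfl⟩ := Finset.mem_image.1 ha
    exact hx.monotone (Fin.le_last i)
  have hLHS : (∑ i, f (x i) / ∏ j ∈ Finset.univ.erase i, ((x i : ℝ) - (x j : ℝ))) = dd S f := by
    rw [dd, hSdef, Finset.sum_image (fun a _ b _ h => hinj h)]
    refine Finset.sum_congr rfl fun i _ => ?_
    congr 1
    rw [← Finset.image_erase hinj, Finset.prod_image (fun a _ b _ h => hinj h)]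
  set V : Set ℝ := {v : ℝ | ∃ z : ℤ, x 0 ≤ z ∧ z ≤ x (Fin.last r) ∧
    v = |∑ k ∈ Finset.range (r + 1), (-1 : ℝ) ^ k * (r.choose k : ℝ) * f (z - k)|} with hVdef
  have hVim : V = (fun z : ℤ => |bdiff r f z|) '' (Set.Icc (x 0) (x (Fin.last r))) := by
    ext v
    constructor
    · rintro ⟨z, h1, h2, rfl⟩; exact ⟨z, ⟨h1, h2⟩, rfl⟩
    · rintro ⟨z, ⟨h1, h2⟩, rfl⟩; exact ⟨z, h1, h2, rfl⟩
  have hfin : V.Finite := by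
    rw [hVim]; exact (Set.finite_Icc _ _).image _
  have hbdd : BddAbove V := hfin.bddAbove
  have hle0 : x 0 ≤ x (Fin.last r) := hx.monotone (Fin.zero_le _)
  have hmem : ∀ z : ℤ, x 0 ≤ z → z ≤ x (Fin.last r) → |bdiff r f z| ≤ sSup V :=
    fun z h1 h2 => le_csSup hbdd ⟨z, h1, h2, rfl⟩
  have hS0 : 0 ≤ sSup V := le_trans (abs_nonneg _) (hmem (x 0) le_rfl hle0)
  have hrf : (0 : ℝ) < r.factorial := by positivity
  have hq : dd S (qq r) = 1 / r.factorial := by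
    refine le_antisymm ?_ ?_
    · have h2 := dd_ge' r S hSne hcard (fun t => -qq r t) (-1)
        (fun z _ _ => by rw [bdiff_neg, bdiff_qq])
      rw [dd_neg] at h2
      rw [neg_div] at h2
      linarith
    · exact dd_ge' r S hSne hcard (qq r) 1 (fun z _ _ => by rw [bdiff_qq])
  have hup : dd S f ≤ sSup V * (1 / r.factorial) := by
    have h3 := dd_ge' r S hSne hcard (fun t => sSup V * qq r t - f t) 0 ?_
    · have e : dd S (fun t => sSup V * qq r t - f t)
          = sSup V * dd S (qq r) - dd S f := by rw [dd_sub, dd_smul]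
      rw [e, hq, zero_div] at h3
      linarith
    · intro z hz1 hz2
      rw [bdiff_sub, bdiff_smul, bdiff_qq]
      have := hmem z (by rwa [hmin] at hz1) (by rwa [hmax] at hz2)
      have := abs_le.1 this
      linarith [this.2]
  have hlo : -(sSup V * (1 / r.factorial)) ≤ dd S f := by
    have h3 := dd_ge' r S hSne hcard (fun t => sSup V * qq r t + f t) 0 ?_
    · have e : dd S (fun t => sSup V * qq r t + f t)
          = sSup V * dd S (qq r) + dd S f := by rw [dd_add, dd_smul]
      rw [e, hq, zero_div] at h3
      linarith
    · intro z hz1 hz2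
      rw [bdiff_add, bdiff_smul, bdiff_qq]
      have := hmem z (by rwa [hmin] at hz1) (by rwa [hmax] at hz2)
      have := abs_le.1 this
      linarith [this.1]
  rw [hLHS]
  rw [show (1 / (r.factorial : ℝ)) * sSup V = sSup V * (1 / r.factorial) from by ring]
  exact abs_le.2 ⟨hlo, hup⟩
end
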